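/- (Lemma 2.3, eigenvector of the Coxeter element attached to any height function.) Let Γ be a finite simple graph admitting a height function p, let μ ∈ ℂ^V and q ∈ ℂ, q ≠ 0, satisfy I·μ = (q + q^{−1})·μ, and set Λ[p] := Σ_{a∈V} q^{p_a} μ_a e_a. Let a_1, …, a_n be any enumeration of V with p_{a_1} ≥ p_{a_2} ≥ … ≥ p_{a_n}. Then (s_{a_1} ∘ s_{a_2} ∘ … ∘ s_{a_n})(Λ[p]) = q²·Λ[p] (the composition applies s_{a_n} first). -/

import Mathlib

open Finset

/-- The reflection `s_a` on `ℂ^V` attached to a vertex `a` of a simple graph `G`: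
it sends the basis vector `e_a` to `−e_a` and `e_b` to `e_b + I_{ab}·e_a` for `b ≠ a`,
where `I` is the adjacency matrix.  In coordinates, `(s_a v)_c = v_c` for `c ≠ a` and
`(s_a v)_a = (∑_b I_{ab} v_b) − v_a`. -/
noncomputable def sRef {V : Type*} [Fintype V] [DecidableEq V]
    (G : SimpleGraph V) [DecidableRel G.Adj] (a : V) (v : V → ℂ) : V → ℂ :=
  fun c => if c = a then (∑ b, if G.Adj a b then v b else 0) - v a else v c

/-- The composition `s_{a₁} ∘ s_{a₂} ∘ … ∘ s_{aₙ}` of reflections along a list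
`L = [a₁, …, aₙ]` of vertices (the reflection at the last entry is applied first). -/
noncomputable def compList {V : Type*} [Fintype V] [DecidableEq V]
    (G : SimpleGraph V) [DecidableRel G.Adj] (L : List V) (v : V → ℂ) : V → ℂ :=
  L.foldr (fun a w => sRef G a w) v

theorem compList_aux {V : Type*} [Fintype V] [DecidableEq V]
    (G : SimpleGraph V) [DecidableRel G.Adj]
    (p : V → ℤ) (hp : ∀ a b : V, G.Adj a b → |p a - p b| = 1)
    (μ : V → ℂ) (q : ℂ) (hq : q ≠ 0)
    (heig : ∀ a : V, (∑ b, if G.Adj a b then μ b else 0) = (q + q⁻¹) * μ a)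
    (Λ : V → ℂ) (hΛ : ∀ a : V, Λ a = q ^ (p a) * μ a) :
    ∀ L : List V, L.Nodup → L.Pairwise (fun a b => p b ≤ p a) →
      (∀ a ∈ L, ∀ b, G.Adj a b → p b < p a → b ∈ L) →
      ∀ c, compList G L Λ c = if c ∈ L then q ^ 2 * Λ c else Λ c := by
  intro L
  induction L with
  | nil => intro _ _ _ c; simp [compList]
  | cons a L' ih =>
    intro hnd hs hcl c
    have ha : a ∉ L' := (List.nodup_cons.mp hnd).1
    have hnd' : L'.Nodup := (List.nodup_cons.mp hnd).2
    have hle : ∀ b ∈ L', p b ≤ p a := fun b hb => (List.pairwise_cons.mp hs).1 b hb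
    have hs' : L'.Pairwise (fun a b => p b ≤ p a) := (List.pairwise_cons.mp hs).2
    have hcl' : ∀ x ∈ L', ∀ b, G.Adj x b → p b < p x → b ∈ L' := by
      intro x hx b hadj hlt
      have hb := hcl x (List.mem_cons_of_mem _ hx) b hadj hlt
      rcases List.mem_cons.mp hb with h | h
      · exfalso; have := hle x hx; subst h; omega
      · exact h
    have hIH := ih hnd' hs' hcl'
    have hstep : compList G (a :: L') Λ c = sRef G a (compList G L' Λ) c := rfl
    set w := compList G L' Λ with hw
    by_cases hc : c = a
    · subst hc
      have hwc : w c = Λ c := by rw [hIH c, if_neg ha]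
      have hnb : ∀ b, G.Adj c b → w b = q ^ (p c + 1) * μ b := by
        intro b hadj
        have h1 := hp c b hadj
        have hne : b ≠ c := fun h => G.loopless.irrefl c (h ▸ hadj)
        rcases (abs_eq (by norm_num : (0:ℤ) ≤ 1)).mp h1 with h | h
        · -- p b = p c - 1, b is below, so b ∈ L'
          have hbmem : b ∈ L' := by
            have hb := hcl c List.mem_cons_self b hadj (by omega)
            rcases List.mem_cons.mp hb with h' | h'
            · exact absurd h' hne
            · exact h'
          rw [hIH b, if_pos hbmem, hΛ b]
          have hpb : p b = p c - 1 := by omega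
          rw [hpb, show p c + 1 = (p c - 1) + 2 by ring, zpow_add₀ hq]
          have : (q : ℂ) ^ (2:ℤ) = q ^ (2:ℕ) := by norm_cast
          rw [this]; ring
        · -- p b = p c + 1, b is above, so b ∉ L'
          have hbmem : b ∉ L' := fun hb => by have := hle b hb; omega
          rw [hIH b, if_neg hbmem, hΛ b]
          congr 1
          have : p b = p c + 1 := by omega
          rw [this]
      rw [hstep]
      simp only [sRef]
      rw [if_pos trivial, hwc]
      have hsum : (∑ b, if G.Adj c b then w b else 0)
          = q ^ (p c + 1) * ((q + q⁻¹) * μ c) := by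
        have h1 : (∑ b, if G.Adj c b then w b else 0)
            = ∑ b, if G.Adj c b then q ^ (p c + 1) * μ b else 0 := by
          refine Finset.sum_congr rfl fun b _ => ?_
          by_cases h : G.Adj c b
          · rw [if_pos h, if_pos h, hnb b h]
          · rw [if_neg h, if_neg h]
        rw [h1, ← heig c, Finset.mul_sum]
        refine Finset.sum_congr rfl fun b _ => ?_
        by_cases h : G.Adj c b <;> simp [h]
      rw [hsum, if_pos List.mem_cons_self, hΛ c, zpow_add_one₀ hq]
      field_simp
      ring
    · rw [hstep]
      simp only [sRef]
      rw [if_neg hc, hIH c]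
      by_cases hcL : c ∈ L'
      · rw [if_pos hcL, if_pos (List.mem_cons_of_mem _ hcL)]
      · rw [if_neg hcL, if_neg (by simp [hc, hcL])]

/-- **Lemma 2.3, eigenvector of the Coxeter element attached to any height
function.**  Let `Γ` be a finite simple graph admitting a height function `p` (that is,
`|p_a − p_b| = 1` whenever `a` and `b` are adjacent), let `μ ∈ ℂ^V` and `q ≠ 0` satisfy
`I·μ = (q + q⁻¹)·μ`, and set `Λ[p] := ∑_{a∈V} q^{p_a} μ_a e_a`.  Let `a₁, …, aₙ` be any
enumeration of `V` with `p_{a₁} ≥ p_{a₂} ≥ … ≥ p_{aₙ}`.  Then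
`(s_{a₁} ∘ s_{a₂} ∘ … ∘ s_{aₙ})(Λ[p]) = q²·Λ[p]` (the composition applies `s_{aₙ}`
first). -/
theorem coxeter_eigenvector_of_height_function {V : Type*} [Fintype V] [DecidableEq V]
    (G : SimpleGraph V) [DecidableRel G.Adj]
    (p : V → ℤ) (hp : ∀ a b : V, G.Adj a b → |p a - p b| = 1)
    (μ : V → ℂ) (q : ℂ) (hq : q ≠ 0)
    (heig : ∀ a : V, (∑ b, if G.Adj a b then μ b else 0) = (q + q⁻¹) * μ a)
    (Λ : V → ℂ) (hΛ : ∀ a : V, Λ a = q ^ (p a) * μ a)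
    (L : List V) (hLnd : L.Nodup) (hLmem : ∀ v : V, v ∈ L)
    (hLsort : L.Pairwise (fun a b => p b ≤ p a)) :
    compList G L Λ = fun a => q ^ 2 * Λ a := by
  funext a
  rw [compList_aux G p hp μ q hq heig Λ hΛ L hLnd hLsort
      (fun x _ b _ _ => hLmem b) a, if_pos (hLmem a)]
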